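/- Gaussian posterior Gibbs risk is the probit loss (Equation (10), proved in Appendix B): for every w ∈ ℝ^d, every x ∈ ℝ^d with x ≠ 0, and every y ∈ {−1,+1}, the Gaussian measure γ_w assigns to the half-space {w' ∈ ℝ^d : y·(w'·x) ≤ 0} the probability Φ(y·(w·x)/‖x‖). Consequently, for any domain P over ℝ^d×{−1,+1} with P-almost surely x ≠ 0, the Gibbs risk satisfies R_P(G_{ρ_w}) = E_{(x,y)~P} Φ(y·(w·x)/‖x‖). -/

import Mathlib

open MeasureTheory

noncomputable section

/-- The 0-1 loss on labels in `{−1,+1}`, encoded by `Bool` (`false ↦ −1`, `true ↦ +1`). -/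
def l01 (a b : Bool) : ℝ := if a = b then 0 else 1

/-- The real value of a label: `true ↦ +1`, `false ↦ −1`. -/
def yval (b : Bool) : ℝ := if b then 1 else -1

variable {d : ℕ}

/-- Dot product on `ℝ^d`. -/
def dotp (w x : Fin d → ℝ) : ℝ := ∑ i, w i * x i

/-- Euclidean norm on `ℝ^d`. -/
def nrm (x : Fin d → ℝ) : ℝ := Real.sqrt (∑ i, x i ^ 2)

open Classical in
/-- The linear classifier `h_w(x) = sign(w·x)` (`true ↦ +1`, `false ↦ −1`). -/
def hlin (w x : Fin d → ℝ) : Bool := if 0 < dotp w x then true else false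

/-- The Gaussian measure `γ_w` on `ℝ^d` with mean `w` and identity covariance, given as the
product over coordinates of one-dimensional Gaussians `N(w_i, 1)`. -/
def gauss (w : Fin d → ℝ) : Measure (Fin d → ℝ) :=
  Measure.pi fun i => ProbabilityTheory.gaussianReal (w i) 1

/-- The standard Gaussian tail function `Φ(z) = (1/√(2π)) ∫_z^∞ e^{−t²/2} dt`. -/
def gaussTail (z : ℝ) : ℝ :=
  ∫ t in Set.Ici z, Real.exp (-t ^ 2 / 2) / Real.sqrt (2 * Real.pi)

section Aux

open ProbabilityTheory Real NNReal

lemma pdf_conv (v₁ v₂ : ℝ≥0) (h1 : v₁ ≠ 0) (h2 : v₂ ≠ 0) (μ₁ μ₂ t x : ℝ) :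
    gaussianPDFReal μ₁ v₁ x * gaussianPDFReal μ₂ v₂ (t - x)
      = gaussianPDFReal (μ₁+μ₂) (v₁+v₂) t *
        gaussianPDFReal ((μ₁*v₂+(t-μ₂)*v₁)/(v₁+v₂)) (v₁*v₂/(v₁+v₂)) x := by
  have ha : (0:ℝ) < v₁ := by exact_mod_cast (pos_iff_ne_zero.mpr h1)
  have hb : (0:ℝ) < v₂ := by exact_mod_cast (pos_iff_ne_zero.mpr h2)
  have hab : (0:ℝ) < (v₁:ℝ) + v₂ := by linarith
  unfold gaussianPDFReal
  push_cast
  rw [mul_mul_mul_comm, mul_mul_mul_comm ((√(2 * π * ((v₁:ℝ)+v₂)))⁻¹)]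
  congr 1
  · rw [← mul_inv, ← mul_inv, ← Real.sqrt_mul (by positivity), ← Real.sqrt_mul (by positivity)]
    congr 1
    field_simp
  · rw [← Real.exp_add, ← Real.exp_add]
    congr 1
    field_simp
    ring

lemma pdf_shift (μ c : ℝ) (v : ℝ≥0) (y : ℝ) :
    gaussianPDFReal (μ + c) v y = gaussianPDFReal μ v (y - c) := by
  unfold gaussianPDFReal; ring_nf

lemma gauss_conv (μ₁ μ₂ : ℝ) (v₁ v₂ : ℝ≥0) :
    ((gaussianReal μ₁ v₁).prod (gaussianReal μ₂ v₂)).map (fun p => p.1 + p.2)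
      = gaussianReal (μ₁+μ₂) (v₁+v₂) := by
  rcases eq_or_ne v₁ 0 with h1 | h1
  · subst h1
    rw [gaussianReal_zero_var, Measure.dirac_prod, Measure.map_map (by fun_prop) (by fun_prop)]
    have : ((fun p : ℝ × ℝ => p.1 + p.2) ∘ Prod.mk μ₁) = (μ₁ + ·) := rfl
    rw [this, gaussianReal_map_const_add, zero_add, add_comm μ₂ μ₁]
  rcases eq_or_ne v₂ 0 with h2 | h2
  · subst h2
    rw [gaussianReal_zero_var, Measure.prod_dirac, Measure.map_map (by fun_prop) (by fun_prop)]
    have : ((fun p : ℝ × ℝ => p.1 + p.2) ∘ (fun x => (x, μ₂))) = (· + μ₂) := rfl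
    rw [this, gaussianReal_map_add_const, add_zero]
  have h12 : v₁ + v₂ ≠ 0 := by positivity
  have hv' : v₁ * v₂ / (v₁ + v₂) ≠ 0 := by
    simp [div_eq_zero_iff, mul_eq_zero, h1, h2, h12]
  have hmeas2 : Measurable fun p : ℝ × ℝ => gaussianPDFReal μ₂ v₂ (p.2 - p.1) := by
    exact (measurable_gaussianPDFReal μ₂ v₂).comp (measurable_snd.sub measurable_fst)
  ext s hs
  rw [Measure.map_apply (by fun_prop) hs,
    Measure.prod_apply (hs.preimage (by fun_prop))]
  have hstep : ∀ x : ℝ, gaussianReal μ₂ v₂ (Prod.mk x ⁻¹' ((fun p : ℝ × ℝ => p.1 + p.2) ⁻¹' s))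
      = ∫⁻ y in s, ENNReal.ofReal (gaussianPDFReal μ₂ v₂ (y - x)) := by
    intro x
    have hpre : (Prod.mk x ⁻¹' ((fun p : ℝ × ℝ => p.1 + p.2) ⁻¹' s)) = (x + ·) ⁻¹' s := rfl
    rw [hpre, ← Measure.map_apply (by fun_prop) hs, gaussianReal_map_const_add,
      gaussianReal_apply _ h2]
    unfold gaussianPDF
    congr 1
    ext y
    rw [add_comm μ₂ x, ← pdf_shift μ₂ x v₂ y, add_comm x μ₂]
  simp_rw [hstep]
  rw [gaussianReal_of_var_ne_zero _ h1,
    lintegral_withDensity_eq_lintegral_mul _ (measurable_gaussianPDF _ _)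
      (by
        apply Measurable.lintegral_prod_right'
          (f := fun p : ℝ × ℝ => ENNReal.ofReal (gaussianPDFReal μ₂ v₂ (p.2 - p.1)))
        exact hmeas2.ennreal_ofReal)]
  simp only [Pi.mul_apply]
  have hpush : ∀ x : ℝ, gaussianPDF μ₁ v₁ x *
        ∫⁻ y in s, ENNReal.ofReal (gaussianPDFReal μ₂ v₂ (y - x))
      = ∫⁻ y in s, ENNReal.ofReal (gaussianPDFReal μ₁ v₁ x) *
          ENNReal.ofReal (gaussianPDFReal μ₂ v₂ (y - x)) := by
    intro x
    have hm : Measurable fun y : ℝ => ENNReal.ofReal (gaussianPDFReal μ₂ v₂ (y - x)) :=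
      ((measurable_gaussianPDFReal μ₂ v₂).comp (measurable_sub_const x)).ennreal_ofReal
    rw [lintegral_const_mul _ hm]
    rfl
  simp_rw [hpush]
  rw [lintegral_lintegral_swap (by
    apply Measurable.aemeasurable
    exact ((measurable_gaussianPDFReal μ₁ v₁).comp measurable_fst).ennreal_ofReal.mul
      hmeas2.ennreal_ofReal)]
  rw [gaussianReal_apply _ h12]
  apply lintegral_congr
  intro y
  have hint : Integrable (fun x => gaussianPDFReal μ₁ v₁ x * gaussianPDFReal μ₂ v₂ (y - x)) := by
    have : (fun x => gaussianPDFReal μ₁ v₁ x * gaussianPDFReal μ₂ v₂ (y - x))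
        = fun x => gaussianPDFReal (μ₁+μ₂) (v₁+v₂) y *
            gaussianPDFReal ((μ₁*v₂+(y-μ₂)*v₁)/(v₁+v₂)) (v₁*v₂/(v₁+v₂)) x := by
      funext x; exact pdf_conv v₁ v₂ h1 h2 μ₁ μ₂ y x
    rw [this]
    exact (integrable_gaussianPDFReal _ _).const_mul _
  calc ∫⁻ x, ENNReal.ofReal (gaussianPDFReal μ₁ v₁ x) *
          ENNReal.ofReal (gaussianPDFReal μ₂ v₂ (y - x))
      = ∫⁻ x, ENNReal.ofReal (gaussianPDFReal μ₁ v₁ x * gaussianPDFReal μ₂ v₂ (y - x)) := by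
        simp_rw [ENNReal.ofReal_mul (gaussianPDFReal_nonneg μ₁ v₁ _)]
    _ = ENNReal.ofReal (∫ x, gaussianPDFReal μ₁ v₁ x * gaussianPDFReal μ₂ v₂ (y - x)) := by
        rw [← ofReal_integral_eq_lintegral_ofReal hint (ae_of_all _ fun x =>
          mul_nonneg (gaussianPDFReal_nonneg _ _ _) (gaussianPDFReal_nonneg _ _ _))]
    _ = gaussianPDF (μ₁+μ₂) (v₁+v₂) y := by
        unfold gaussianPDF
        congr 1
        simp_rw [pdf_conv v₁ v₂ h1 h2 μ₁ μ₂ y]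
        rw [MeasureTheory.integral_const_mul, integral_gaussianPDFReal_eq_one _ hv', mul_one]

instance gauss_prob (w : Fin d → ℝ) : IsProbabilityMeasure (gauss w) := by
  unfold gauss; infer_instance

lemma measurable_dotp (x : Fin d → ℝ) : Measurable (fun u : Fin d → ℝ => dotp u x) := by
  unfold dotp
  exact Finset.measurable_sum _ fun i _ => (measurable_pi_apply i).mul measurable_const

lemma map_dotp : ∀ (d : ℕ) (w x : Fin d → ℝ),
    (gauss w).map (fun u => dotp u x)
      = gaussianReal (dotp w x) ⟨∑ i, x i ^ 2, by positivity⟩ := by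
  intro d
  induction d with
  | zero =>
    intro w x
    have h0 : (fun u : Fin 0 → ℝ => dotp u x) = fun _ => (0:ℝ) := by
      funext u; simp [dotp]
    rw [h0, Measure.map_const, measure_univ, one_smul]
    have : dotp w x = 0 := by simp [dotp]
    rw [this]
    have : (⟨∑ i : Fin 0, x i ^ 2, by positivity⟩ : ℝ≥0) = 0 := by
      ext; simp
    rw [this]
    exact (gaussianReal_zero_var 0).symm
  | succ n ih =>
    intro w x
    have hmp := (measurePreserving_piFinSuccAbove
      (fun i : Fin (n+1) => gaussianReal (w i) 1) 0)
    simp only [Fin.succAbove_zero] at hmp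
    have hpi : gauss w = Measure.map (MeasurableEquiv.piFinSuccAbove (fun _ => ℝ) 0).symm
        ((gaussianReal (w 0) 1).prod (gauss (fun j => w j.succ))) := by
      unfold gauss
      rw [← hmp.map_eq, Measure.map_map (MeasurableEquiv.measurable _)
        (MeasurableEquiv.measurable _)]
      simp only [MeasurableEquiv.symm_comp_self, Measure.map_id]
    rw [hpi, Measure.map_map (measurable_dotp x) (MeasurableEquiv.measurable _)]
    have hcomp : (fun u : Fin (n+1) → ℝ => dotp u x) ∘
        (MeasurableEquiv.piFinSuccAbove (fun _ => ℝ) 0).symm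
        = (fun q : ℝ × ℝ => q.1 + q.2) ∘
          (Prod.map (fun a : ℝ => x 0 * a) (fun v : Fin n → ℝ => dotp v (fun j => x j.succ))) := by
      funext p
      simp only [Function.comp_apply, Prod.map_apply]
      have he : (MeasurableEquiv.piFinSuccAbove (fun _ => ℝ) 0).symm p
          = Fin.insertNth 0 p.1 p.2 := rfl
      rw [he]
      simp only [Fin.insertNth_zero]
      unfold dotp
      rw [Fin.sum_univ_succ]
      simp [Fin.cons_succ, mul_comm]
    rw [hcomp, ← Measure.map_map (by fun_prop)
        ((measurable_const_mul (x 0)).prodMap (measurable_dotp _)),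
      ← Measure.map_prod_map _ _ (measurable_const_mul (x 0)) (measurable_dotp _),
      gaussianReal_map_const_mul, ih]
    refine (gauss_conv _ _ _ _).trans ?_
    congr 1
    · unfold dotp
      rw [Fin.sum_univ_succ]
      simp [mul_comm]
    · ext
      push_cast
      change (x 0 ^ 2 * 1 + ∑ i : Fin n, x i.succ ^ 2 : ℝ) = ∑ i, x i ^ 2
      rw [Fin.sum_univ_succ]
      simp [mul_pow]

lemma pdf01 : gaussianPDFReal 0 1 = fun t => Real.exp (-t ^ 2 / 2) / Real.sqrt (2 * Real.pi) := by
  funext t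
  simp [gaussianPDFReal, div_eq_inv_mul]

lemma gaussianReal_eq_map_neg (m : ℝ) (v : ℝ≥0) :
    gaussianReal m v = (gaussianReal 0 1).map (fun t => -Real.sqrt v * t + m) := by
  have h1 : (fun t : ℝ => -Real.sqrt v * t + m) = (· + m) ∘ ((-Real.sqrt v) * ·) := rfl
  rw [h1, ← Measure.map_map (by fun_prop) (by fun_prop), gaussianReal_map_const_mul,
    gaussianReal_map_add_const]
  norm_num

lemma gaussianReal_eq_map_pos (m : ℝ) (v : ℝ≥0) :
    gaussianReal m v = (gaussianReal 0 1).map (fun t => Real.sqrt v * t + m) := by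
  have h1 : (fun t : ℝ => Real.sqrt v * t + m) = (· + m) ∘ ((Real.sqrt v) * ·) := rfl
  rw [h1, ← Measure.map_map (by fun_prop) (by fun_prop), gaussianReal_map_const_mul,
    gaussianReal_map_add_const]
  norm_num

lemma gaussianReal_std_Ici (z : ℝ) :
    gaussianReal 0 1 (Set.Ici z) = ENNReal.ofReal (gaussTail z) := by
  rw [gaussianReal_apply_eq_integral _ one_ne_zero, pdf01]
  rfl

lemma gaussianReal_Iic (m : ℝ) (v : ℝ≥0) (hv : v ≠ 0) :
    gaussianReal m v (Set.Iic 0) = ENNReal.ofReal (gaussTail (m / Real.sqrt v)) := by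
  have hs : (0:ℝ) < Real.sqrt v := Real.sqrt_pos.mpr (by exact_mod_cast pos_iff_ne_zero.mpr hv)
  rw [gaussianReal_eq_map_neg m v, Measure.map_apply (by fun_prop) measurableSet_Iic]
  have hpre : (fun t : ℝ => -Real.sqrt v * t + m) ⁻¹' Set.Iic 0 = Set.Ici (m / Real.sqrt v) := by
    ext t
    simp only [Set.mem_preimage, Set.mem_Iic, Set.mem_Ici, div_le_iff₀ hs]
    constructor <;> intro h <;> nlinarith
  rw [hpre, gaussianReal_std_Ici]

lemma gaussianReal_Ici (m : ℝ) (v : ℝ≥0) (hv : v ≠ 0) :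
    gaussianReal m v (Set.Ici 0) = ENNReal.ofReal (gaussTail (-m / Real.sqrt v)) := by
  have hs : (0:ℝ) < Real.sqrt v := Real.sqrt_pos.mpr (by exact_mod_cast pos_iff_ne_zero.mpr hv)
  rw [gaussianReal_eq_map_pos m v, Measure.map_apply (by fun_prop) measurableSet_Ici]
  have hpre : (fun t : ℝ => Real.sqrt v * t + m) ⁻¹' Set.Ici 0 = Set.Ici (-m / Real.sqrt v) := by
    ext t
    simp only [Set.mem_preimage, Set.mem_Ici, div_le_iff₀ hs]
    constructor <;> intro h <;> nlinarith
  rw [hpre, gaussianReal_std_Ici]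

lemma gaussTail_nonneg (z : ℝ) : 0 ≤ gaussTail z :=
  integral_nonneg fun t => by positivity

lemma sumsq_pos {x : Fin d → ℝ} (hx : x ≠ 0) : 0 < ∑ i, x i ^ 2 := by
  rcases Function.ne_iff.mp hx with ⟨i, hi⟩
  exact Finset.sum_pos' (fun j _ => sq_nonneg _) ⟨i, Finset.mem_univ i, lt_of_le_of_ne (sq_nonneg _) (Ne.symm (pow_ne_zero 2 hi))⟩

lemma nnreal_sumsq_ne {x : Fin d → ℝ} (hx : x ≠ 0) :
    (⟨∑ i, x i ^ 2, by positivity⟩ : ℝ≥0) ≠ 0 := by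
  intro h
  have := congrArg NNReal.toReal h
  change ∑ i, x i ^ 2 = 0 at this
  exact absurd this (sumsq_pos hx).ne'

lemma halfspace_le (w : Fin d → ℝ) {x : Fin d → ℝ} (hx : x ≠ 0) :
    gauss w {w' | dotp w' x ≤ 0} = ENNReal.ofReal (gaussTail (dotp w x / nrm x)) := by
  have : {w' : Fin d → ℝ | dotp w' x ≤ 0} = (fun u => dotp u x) ⁻¹' Set.Iic 0 := rfl
  rw [this, ← Measure.map_apply (measurable_dotp x) measurableSet_Iic, map_dotp,
    gaussianReal_Iic _ _ (nnreal_sumsq_ne hx)]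
  rfl

lemma halfspace_ge (w : Fin d → ℝ) {x : Fin d → ℝ} (hx : x ≠ 0) :
    gauss w {w' | 0 ≤ dotp w' x} = ENNReal.ofReal (gaussTail (-dotp w x / nrm x)) := by
  have : {w' : Fin d → ℝ | 0 ≤ dotp w' x} = (fun u => dotp u x) ⁻¹' Set.Ici 0 := rfl
  rw [this, ← Measure.map_apply (measurable_dotp x) measurableSet_Ici, map_dotp,
    gaussianReal_Ici _ _ (nnreal_sumsq_ne hx)]
  rfl

lemma boundary_null (w : Fin d → ℝ) {x : Fin d → ℝ} (hx : x ≠ 0) :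
    gauss w {w' | dotp w' x = 0} = 0 := by
  have : {w' : Fin d → ℝ | dotp w' x = 0} = (fun u => dotp u x) ⁻¹' {0} := rfl
  rw [this, ← Measure.map_apply (measurable_dotp x) (measurableSet_singleton 0), map_dotp]
  exact gaussianReal_absolutelyContinuous _ (nnreal_sumsq_ne hx) (measure_singleton 0)

end Aux

/-- Gaussian posterior Gibbs risk is the probit loss. -/
theorem gaussian_gibbs_risk_probit (d : ℕ) (w : Fin d → ℝ) :
    (∀ x : Fin d → ℝ, x ≠ 0 → ∀ y : Bool,
      gauss w {w' | yval y * dotp w' x ≤ 0}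
        = ENNReal.ofReal (gaussTail (yval y * dotp w x / nrm x)))
    ∧ ∀ P : Measure ((Fin d → ℝ) × Bool), IsProbabilityMeasure P →
        (∀ᵐ z ∂P, z.1 ≠ 0) →
        ∫ w', ∫ z, l01 (hlin w' z.1) z.2 ∂P ∂(gauss w)
          = ∫ z, gaussTail (yval z.2 * dotp w z.1 / nrm z.1) ∂P := by
  constructor
  · intro x hx y
    cases y
    · have h1 : {w' : Fin d → ℝ | yval false * dotp w' x ≤ 0} = {w' | 0 ≤ dotp w' x} := by
        ext w'; simp [yval]
      rw [h1, halfspace_ge w hx]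
      congr 2
      simp [yval]
    · have h1 : {w' : Fin d → ℝ | yval true * dotp w' x ≤ 0} = {w' | dotp w' x ≤ 0} := by
        ext w'; simp [yval]
      rw [h1, halfspace_le w hx]
      congr 2
      simp [yval]
  · intro P hP haeP
    -- inner integral computation
    have key : ∀ x : Fin d → ℝ, x ≠ 0 → ∀ y : Bool,
        ∫ w', l01 (hlin w' x) y ∂(gauss w) = gaussTail (yval y * dotp w x / nrm x) := by
      intro x hx y
      cases y
      · have hfe : (fun w' : Fin d → ℝ => l01 (hlin w' x) false)
            = Set.indicator {w' | 0 < dotp w' x} (1 : (Fin d → ℝ) → ℝ) := by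
          funext w'
          by_cases h : 0 < dotp w' x <;>
            simp [l01, hlin, h, Set.indicator_apply]
        rw [hfe, integral_indicator_one (measurableSet_lt measurable_const (measurable_dotp x))]
        have hae : {w' : Fin d → ℝ | 0 < dotp w' x} =ᵐ[gauss w] {w' | 0 ≤ dotp w' x} := by
          rw [Filter.eventuallyEq_set]
          filter_upwards [Filter.eventually_of_mem
            (by
              rw [mem_ae_iff]
              have : {w' : Fin d → ℝ | dotp w' x = 0}ᶜᶜ = {w' | dotp w' x = 0} := compl_compl _
              rw [this]
              exact boundary_null w hx)
            (fun w' (hw' : w' ∈ {w'' : Fin d → ℝ | dotp w'' x = 0}ᶜ) => hw')] with w' hw'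
          simp only [Set.mem_compl_iff, Set.mem_setOf_eq] at hw' ⊢
          constructor
          · exact le_of_lt
          · intro h; exact lt_of_le_of_ne h (Ne.symm hw')
        rw [measureReal_def, measure_congr hae, halfspace_ge w hx, ENNReal.toReal_ofReal (gaussTail_nonneg _)]
        congr 1
        simp [yval]
      · have hfe : (fun w' : Fin d → ℝ => l01 (hlin w' x) true)
            = Set.indicator {w' | dotp w' x ≤ 0} (1 : (Fin d → ℝ) → ℝ) := by
          funext w'
          by_cases h : 0 < dotp w' x <;>
            simp [l01, hlin, h, Set.indicator_apply, not_lt.mp, not_lt]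
        rw [hfe, integral_indicator_one (measurableSet_le (measurable_dotp x) measurable_const),
          measureReal_def, halfspace_le w hx, ENNReal.toReal_ofReal (gaussTail_nonneg _)]
        congr 1
        simp [yval]
    -- measurability of the loss
    have hdm : Measurable fun q : (Fin d → ℝ) × ((Fin d → ℝ) × Bool) => dotp q.1 q.2.1 := by
      unfold dotp
      exact Finset.measurable_sum _ fun i _ =>
        ((measurable_pi_apply i).comp measurable_fst).mul
          ((measurable_pi_apply i).comp (measurable_fst.comp measurable_snd))
    have hhm : Measurable fun q : (Fin d → ℝ) × ((Fin d → ℝ) × Bool) => hlin q.1 q.2.1 := by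
      apply measurable_to_countable'
      intro b
      cases b
      · have : (fun q : (Fin d → ℝ) × ((Fin d → ℝ) × Bool) => hlin q.1 q.2.1) ⁻¹' {false}
            = {q | dotp q.1 q.2.1 ≤ 0} := by
          ext q
          simp [hlin, not_lt]
        rw [this]
        exact measurableSet_le hdm measurable_const
      · have : (fun q : (Fin d → ℝ) × ((Fin d → ℝ) × Bool) => hlin q.1 q.2.1) ⁻¹' {true}
            = {q | 0 < dotp q.1 q.2.1} := by
          ext q
          simp [hlin]
        rw [this]
        exact measurableSet_lt measurable_const hdm
    have hsm : MeasurableSet {q : (Fin d → ℝ) × ((Fin d → ℝ) × Bool) |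
        hlin q.1 q.2.1 = q.2.2} :=
      measurableSet_eq_fun hhm (measurable_snd.comp measurable_snd)
    have hfm : Measurable (Function.uncurry
        fun (w' : Fin d → ℝ) (z : (Fin d → ℝ) × Bool) => l01 (hlin w' z.1) z.2) := by
      have : (Function.uncurry
            fun (w' : Fin d → ℝ) (z : (Fin d → ℝ) × Bool) => l01 (hlin w' z.1) z.2)
          = Set.indicator {q : (Fin d → ℝ) × ((Fin d → ℝ) × Bool) |
              hlin q.1 q.2.1 = q.2.2}ᶜ (1 : ((Fin d → ℝ) × ((Fin d → ℝ) × Bool)) → ℝ) := by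
        funext q
        by_cases h : hlin q.1 q.2.1 = q.2.2 <;>
          simp [Function.uncurry, l01, h, Set.indicator_apply]
      rw [this]
      exact measurable_const.indicator hsm.compl
    have hint : Integrable (Function.uncurry
        fun (w' : Fin d → ℝ) (z : (Fin d → ℝ) × Bool) => l01 (hlin w' z.1) z.2)
        ((gauss w).prod P) := by
      apply Integrable.mono' (integrable_const (1:ℝ)) hfm.aestronglyMeasurable
      filter_upwards with q
      rw [Function.uncurry]
      unfold l01
      split <;> simp
    rw [integral_integral_swap hint]
    apply integral_congr_ae
    filter_upwards [haeP] with z hz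
    exact key z.1 hz z.2

end
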